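/- Let u_r, u_z, v_r, v_z : (0,∞)×ℝ → ℝ be C¹ functions and let û, v̂ be the corresponding revolved vector fields on ℝ³. Then at every point (x,y,z) with ρ := √(x²+y²) > 0, the Frobenius inner product of the Jacobians satisfies Dû(x,y,z) : Dv̂(x,y,z) = ∇u(ρ,z) : ∇v(ρ,z) + u_r(ρ,z)·v_r(ρ,z)/ρ², where u = (u_r,u_z), v = (v_r,v_z) and ∇u, ∇v are their 2×2 Jacobian matrices. In particular ‖Dû‖_F² = ‖∇u‖_F² + (u_r/ρ)². -/

import Mathlib

noncomputable section

/-- Partial derivatives of scalar functions on `ℝ²`. -/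
def pdr (f : ℝ × ℝ → ℝ) (p : ℝ × ℝ) : ℝ := fderiv ℝ f p (1, 0)
def pdz (f : ℝ × ℝ → ℝ) (p : ℝ × ℝ) : ℝ := fderiv ℝ f p (0, 1)

/-- Partial derivatives of scalar functions on `ℝ³ = ℝ × ℝ × ℝ`. -/
def pdx3 (f : ℝ × ℝ × ℝ → ℝ) (q : ℝ × ℝ × ℝ) : ℝ := fderiv ℝ f q (1, 0, 0)
def pdy3 (f : ℝ × ℝ × ℝ → ℝ) (q : ℝ × ℝ × ℝ) : ℝ := fderiv ℝ f q (0, 1, 0)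
def pdz3 (f : ℝ × ℝ × ℝ → ℝ) (q : ℝ × ℝ × ℝ) : ℝ := fderiv ℝ f q (0, 0, 1)

/-- The Frobenius inner product `∇F : ∇G` of the 2×2 Jacobians of two planar fields. -/
def jdot2 (F G : ℝ × ℝ → ℝ × ℝ) (p : ℝ × ℝ) : ℝ :=
  pdr (fun s => (F s).1) p * pdr (fun s => (G s).1) p +
  pdz (fun s => (F s).1) p * pdz (fun s => (G s).1) p +
  pdr (fun s => (F s).2) p * pdr (fun s => (G s).2) p +
  pdz (fun s => (F s).2) p * pdz (fun s => (G s).2) p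

/-- The Frobenius inner product `DF : DG` of the 3×3 Jacobians of two spatial fields. -/
def jdot3 (F G : ℝ × ℝ × ℝ → ℝ × ℝ × ℝ) (q : ℝ × ℝ × ℝ) : ℝ :=
  pdx3 (fun s => (F s).1) q * pdx3 (fun s => (G s).1) q +
  pdy3 (fun s => (F s).1) q * pdy3 (fun s => (G s).1) q +
  pdz3 (fun s => (F s).1) q * pdz3 (fun s => (G s).1) q +
  pdx3 (fun s => (F s).2.1) q * pdx3 (fun s => (G s).2.1) q +
  pdy3 (fun s => (F s).2.1) q * pdy3 (fun s => (G s).2.1) q +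
  pdz3 (fun s => (F s).2.1) q * pdz3 (fun s => (G s).2.1) q +
  pdx3 (fun s => (F s).2.2) q * pdx3 (fun s => (G s).2.2) q +
  pdy3 (fun s => (F s).2.2) q * pdy3 (fun s => (G s).2.2) q +
  pdz3 (fun s => (F s).2.2) q * pdz3 (fun s => (G s).2.2) q

/-- The revolved vector field `û` on `ℝ³` associated with the meridian field `(u_r, u_z)`. -/
def revolve (ur uz : ℝ × ℝ → ℝ) (q : ℝ × ℝ × ℝ) : ℝ × ℝ × ℝ :=
  (ur (Real.sqrt (q.1 ^ 2 + q.2.1 ^ 2), q.2.2) * q.1 / Real.sqrt (q.1 ^ 2 + q.2.1 ^ 2),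
   ur (Real.sqrt (q.1 ^ 2 + q.2.1 ^ 2), q.2.2) * q.2.1 / Real.sqrt (q.1 ^ 2 + q.2.1 ^ 2),
   uz (Real.sqrt (q.1 ^ 2 + q.2.1 ^ 2), q.2.2))

/-! ### Auxiliary machinery -/

/-- Coordinate projections on `ℝ³` as continuous linear maps. -/
def LL1 : (ℝ×ℝ×ℝ) →L[ℝ] ℝ := ContinuousLinearMap.fst ℝ ℝ (ℝ×ℝ)
def LL2 : (ℝ×ℝ×ℝ) →L[ℝ] ℝ :=
  (ContinuousLinearMap.fst ℝ ℝ ℝ).comp (ContinuousLinearMap.snd ℝ ℝ (ℝ×ℝ))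
def LL3 : (ℝ×ℝ×ℝ) →L[ℝ] ℝ :=
  (ContinuousLinearMap.snd ℝ ℝ ℝ).comp (ContinuousLinearMap.snd ℝ ℝ (ℝ×ℝ))

@[simp] lemma LL1_apply (v : ℝ×ℝ×ℝ) : LL1 v = v.1 := rfl
@[simp] lemma LL2_apply (v : ℝ×ℝ×ℝ) : LL2 v = v.2.1 := rfl
@[simp] lemma LL3_apply (v : ℝ×ℝ×ℝ) : LL3 v = v.2.2 := rfl

set_option maxHeartbeats 3200000 in
/-- All nine partial derivatives of a revolved field. -/
lemma revolve_pds (ur uz : ℝ × ℝ → ℝ)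
    (hur : ContDiffOn ℝ 1 ur {p : ℝ × ℝ | 0 < p.1})
    (huz : ContDiffOn ℝ 1 uz {p : ℝ × ℝ | 0 < p.1})
    (x y z ρ : ℝ) (hρ : ρ = Real.sqrt (x ^ 2 + y ^ 2)) (hρpos : 0 < ρ) :
    pdx3 (fun s => (revolve ur uz s).1) (x,y,z)
      = pdr ur (ρ,z) * x^2/ρ^2 + ur (ρ,z)/ρ - ur (ρ,z) * x^2/ρ^3 ∧
    pdy3 (fun s => (revolve ur uz s).1) (x,y,z)
      = pdr ur (ρ,z) * x*y/ρ^2 - ur (ρ,z) * x*y/ρ^3 ∧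
    pdz3 (fun s => (revolve ur uz s).1) (x,y,z) = pdz ur (ρ,z) * x/ρ ∧
    pdx3 (fun s => (revolve ur uz s).2.1) (x,y,z)
      = pdr ur (ρ,z) * x*y/ρ^2 - ur (ρ,z) * x*y/ρ^3 ∧
    pdy3 (fun s => (revolve ur uz s).2.1) (x,y,z)
      = pdr ur (ρ,z) * y^2/ρ^2 + ur (ρ,z)/ρ - ur (ρ,z) * y^2/ρ^3 ∧
    pdz3 (fun s => (revolve ur uz s).2.1) (x,y,z) = pdz ur (ρ,z) * y/ρ ∧
    pdx3 (fun s => (revolve ur uz s).2.2) (x,y,z) = pdr uz (ρ,z) * x/ρ ∧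
    pdy3 (fun s => (revolve ur uz s).2.2) (x,y,z) = pdr uz (ρ,z) * y/ρ ∧
    pdz3 (fun s => (revolve ur uz s).2.2) (x,y,z) = pdz uz (ρ,z) := by
  have hρne : ρ ≠ 0 := ne_of_gt hρpos
  have hxy : (0:ℝ) < x^2 + y^2 := by
    nlinarith [Real.sq_sqrt (by positivity : (0:ℝ) ≤ x^2+y^2), hρ, hρpos]
  have hsq0 : Real.sqrt (x^2+y^2) = ρ := hρ.symm
  have h1 : HasFDerivAt (fun q : ℝ×ℝ×ℝ => q.1) LL1 (x,y,z) := hasFDerivAt_fst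
  have h2 : HasFDerivAt (fun q : ℝ×ℝ×ℝ => q.2.1) LL2 (x,y,z) := LL2.hasFDerivAt
  have h3 : HasFDerivAt (fun q : ℝ×ℝ×ℝ => q.2.2) LL3 (x,y,z) := LL3.hasFDerivAt
  have hp : HasFDerivAt (fun q : ℝ×ℝ×ℝ => q.1^2 + q.2.1^2)
      ((x • LL1 + x • LL1) + (y • LL2 + y • LL2)) (x,y,z) := by
    simp only [pow_two]; exact (h1.mul h1).add (h2.mul h2)
  have hsq : HasDerivAt Real.sqrt (1/(2*ρ)) (x^2+y^2) := by
    rw [hρ]; exact Real.hasDerivAt_sqrt (ne_of_gt hxy)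
  have hs : HasFDerivAt (fun q : ℝ×ℝ×ℝ => Real.sqrt (q.1^2 + q.2.1^2))
      ((1/(2*ρ)) • ((x • LL1 + x • LL1) + (y • LL2 + y • LL2))) (x,y,z) := by
    exact hsq.comp_hasFDerivAt (x,y,z) hp
  have hinv : HasFDerivAt (fun q : ℝ×ℝ×ℝ => (Real.sqrt (q.1^2 + q.2.1^2))⁻¹)
      ((-(ρ^2)⁻¹) • ((1/(2*ρ)) • ((x • LL1 + x • LL1) + (y • LL2 + y • LL2)))) (x,y,z) := by
    have h : HasDerivAt (fun t : ℝ => t⁻¹) (-(ρ^2)⁻¹) (Real.sqrt (x^2+y^2)) := by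
      rw [hsq0]; exact hasDerivAt_inv hρne
    exact h.comp_hasFDerivAt (x,y,z) hs
  have hopen : IsOpen {p : ℝ×ℝ | 0 < p.1} := isOpen_lt continuous_const continuous_fst
  have hg : HasFDerivAt (fun q : ℝ×ℝ×ℝ => (Real.sqrt (q.1^2+q.2.1^2), q.2.2))
      ((((1/(2*ρ)) • ((x • LL1 + x • LL1) + (y • LL2 + y • LL2))).prod LL3)) (x,y,z) :=
    hs.prodMk h3
  have hud : HasFDerivAt ur (fderiv ℝ ur (ρ,z)) (Real.sqrt (x^2+y^2), z) := by
    rw [← hρ]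
    exact ((hur.contDiffAt (hopen.mem_nhds (by exact hρpos))).differentiableAt one_ne_zero).hasFDerivAt
  have hzd : HasFDerivAt uz (fderiv ℝ uz (ρ,z)) (Real.sqrt (x^2+y^2), z) := by
    rw [← hρ]
    exact ((huz.contDiffAt (hopen.mem_nhds (by exact hρpos))).differentiableAt one_ne_zero).hasFDerivAt
  have hcomp := hud.comp (x,y,z) hg
  simp only [Function.comp_def] at hcomp
  have hcompz := hzd.comp (x,y,z) hg
  simp only [Function.comp_def] at hcompz
  have hDu : ∀ (f : ℝ × ℝ → ℝ) (t1 t2 : ℝ), fderiv ℝ f (ρ,z) (t1,t2)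
      = t1 * pdr f (ρ,z) + t2 * pdz f (ρ,z) := by
    intro f t1 t2
    have h : (t1,t2) = t1 • ((1:ℝ),(0:ℝ)) + t2 • ((0:ℝ),(1:ℝ)) := by
      simp [Prod.ext_iff]
    rw [h, map_add, map_smul, map_smul, smul_eq_mul, smul_eq_mul, pdr, pdz]
  have hfun1 : (fun s : ℝ×ℝ×ℝ => (revolve ur uz s).1)
      = (fun q : ℝ×ℝ×ℝ =>
          ur (Real.sqrt (q.1^2+q.2.1^2), q.2.2) * q.1 * (Real.sqrt (q.1^2+q.2.1^2))⁻¹) := by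
    funext q; simp [revolve, div_eq_mul_inv]
  have hfun2 : (fun s : ℝ×ℝ×ℝ => (revolve ur uz s).2.1)
      = (fun q : ℝ×ℝ×ℝ =>
          ur (Real.sqrt (q.1^2+q.2.1^2), q.2.2) * q.2.1 * (Real.sqrt (q.1^2+q.2.1^2))⁻¹) := by
    funext q; simp [revolve, div_eq_mul_inv]
  have hfun3 : (fun s : ℝ×ℝ×ℝ => (revolve ur uz s).2.2)
      = (fun q : ℝ×ℝ×ℝ => uz (Real.sqrt (q.1^2+q.2.1^2), q.2.2)) := by
    funext q; simp [revolve]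
  have eF1 := ((hcomp.mul h1).mul hinv).fderiv
  have eF2 := ((hcomp.mul h2).mul hinv).fderiv
  have eF3 := hcompz.fderiv
  simp only [Pi.mul_def] at eF1 eF2
  refine ⟨?_, ?_, ?_, ?_, ?_, ?_, ?_, ?_, ?_⟩
  · simp only [pdx3, hfun1]
    rw [eF1]
    simp only [ContinuousLinearMap.add_apply, ContinuousLinearMap.smul_apply,
      ContinuousLinearMap.comp_apply, ContinuousLinearMap.prod_apply, LL1_apply, LL2_apply,
      LL3_apply, smul_eq_mul, hsq0]
    rw [hDu]
    field_simp
    ring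
  · simp only [pdy3, hfun1]
    rw [eF1]
    simp only [ContinuousLinearMap.add_apply, ContinuousLinearMap.smul_apply,
      ContinuousLinearMap.comp_apply, ContinuousLinearMap.prod_apply, LL1_apply, LL2_apply,
      LL3_apply, smul_eq_mul, hsq0]
    rw [hDu]
    field_simp
    ring
  · simp only [pdz3, hfun1]
    rw [eF1]
    simp only [ContinuousLinearMap.add_apply, ContinuousLinearMap.smul_apply,
      ContinuousLinearMap.comp_apply, ContinuousLinearMap.prod_apply, LL1_apply, LL2_apply,
      LL3_apply, smul_eq_mul, hsq0]
    rw [hDu]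
    field_simp
    ring
  · simp only [pdx3, hfun2]
    rw [eF2]
    simp only [ContinuousLinearMap.add_apply, ContinuousLinearMap.smul_apply,
      ContinuousLinearMap.comp_apply, ContinuousLinearMap.prod_apply, LL1_apply, LL2_apply,
      LL3_apply, smul_eq_mul, hsq0]
    rw [hDu]
    field_simp
    ring
  · simp only [pdy3, hfun2]
    rw [eF2]
    simp only [ContinuousLinearMap.add_apply, ContinuousLinearMap.smul_apply,
      ContinuousLinearMap.comp_apply, ContinuousLinearMap.prod_apply, LL1_apply, LL2_apply,
      LL3_apply, smul_eq_mul, hsq0]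
    rw [hDu]
    field_simp
    ring
  · simp only [pdz3, hfun2]
    rw [eF2]
    simp only [ContinuousLinearMap.add_apply, ContinuousLinearMap.smul_apply,
      ContinuousLinearMap.comp_apply, ContinuousLinearMap.prod_apply, LL1_apply, LL2_apply,
      LL3_apply, smul_eq_mul, hsq0]
    rw [hDu]
    field_simp
    ring
  · simp only [pdx3, hfun3]
    rw [eF3]
    simp only [ContinuousLinearMap.add_apply, ContinuousLinearMap.smul_apply,
      ContinuousLinearMap.comp_apply, ContinuousLinearMap.prod_apply, LL1_apply, LL2_apply,
      LL3_apply, smul_eq_mul, hsq0]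
    rw [hDu]
    field_simp
    ring
  · simp only [pdy3, hfun3]
    rw [eF3]
    simp only [ContinuousLinearMap.add_apply, ContinuousLinearMap.smul_apply,
      ContinuousLinearMap.comp_apply, ContinuousLinearMap.prod_apply, LL1_apply, LL2_apply,
      LL3_apply, smul_eq_mul, hsq0]
    rw [hDu]
    field_simp
    ring
  · simp only [pdz3, hfun3]
    rw [eF3]
    simp only [ContinuousLinearMap.add_apply, ContinuousLinearMap.smul_apply,
      ContinuousLinearMap.comp_apply, ContinuousLinearMap.prod_apply, LL1_apply, LL2_apply,
      LL3_apply, smul_eq_mul, hsq0]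
    rw [hDu]
    simp

set_option maxHeartbeats 1600000 in
/-- The key algebraic identity. -/
lemma key_alg (x y ρ u a b c d u' a' b' c' d' : ℝ) (hρ : ρ ≠ 0) (h : x^2+y^2 = ρ^2) :
    (a*x^2/ρ^2 + u/ρ - u*x^2/ρ^3) * (a'*x^2/ρ^2 + u'/ρ - u'*x^2/ρ^3)
    + (a*x*y/ρ^2 - u*x*y/ρ^3) * (a'*x*y/ρ^2 - u'*x*y/ρ^3)
    + (b*x/ρ) * (b'*x/ρ)
    + (a*x*y/ρ^2 - u*x*y/ρ^3) * (a'*x*y/ρ^2 - u'*x*y/ρ^3)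
    + (a*y^2/ρ^2 + u/ρ - u*y^2/ρ^3) * (a'*y^2/ρ^2 + u'/ρ - u'*y^2/ρ^3)
    + (b*y/ρ) * (b'*y/ρ)
    + (c*x/ρ) * (c'*x/ρ)
    + (c*y/ρ) * (c'*y/ρ)
    + d*d'
    = (a*a' + b*b' + c*c' + d*d') + u*u'/ρ^2 := by
  linear_combination (norm := (field_simp; ring))
    (((a - u/ρ) * (u'/ρ) + (a' - u'/ρ) * (u/ρ)
      + (a - u/ρ) * (a' - u'/ρ) * ((x^2+y^2+ρ^2)/ρ^2) + b*b' + c*c') / ρ^2) * h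

/-- Frobenius inner product of the Jacobians of two revolved fields:
`Dû : Dv̂ = ∇u : ∇v + u_r v_r / ρ²`, and in particular
`‖Dû‖_F² = ‖∇u‖_F² + (u_r/ρ)²`. -/
theorem jacobian_frobenius_of_revolved_fields
    (ur uz vr vz : ℝ × ℝ → ℝ)
    (hur : ContDiffOn ℝ 1 ur {p : ℝ × ℝ | 0 < p.1})
    (huz : ContDiffOn ℝ 1 uz {p : ℝ × ℝ | 0 < p.1})
    (hvr : ContDiffOn ℝ 1 vr {p : ℝ × ℝ | 0 < p.1})
    (hvz : ContDiffOn ℝ 1 vz {p : ℝ × ℝ | 0 < p.1})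
    (x y z ρ : ℝ) (hρ : ρ = Real.sqrt (x ^ 2 + y ^ 2)) (hρpos : 0 < ρ) :
    (jdot3 (revolve ur uz) (revolve vr vz) (x, y, z)
      = jdot2 (fun p => (ur p, uz p)) (fun p => (vr p, vz p)) (ρ, z)
        + ur (ρ, z) * vr (ρ, z) / ρ ^ 2)
    ∧ (jdot3 (revolve ur uz) (revolve ur uz) (x, y, z)
      = jdot2 (fun p => (ur p, uz p)) (fun p => (ur p, uz p)) (ρ, z)
        + (ur (ρ, z) / ρ) ^ 2) := by
  have hρne : ρ ≠ 0 := ne_of_gt hρpos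
  have hρ2 : x^2 + y^2 = ρ^2 := by rw [hρ, Real.sq_sqrt (by positivity)]
  obtain ⟨e11, e12, e13, e21, e22, e23, e31, e32, e33⟩ :=
    revolve_pds ur uz hur huz x y z ρ hρ hρpos
  obtain ⟨f11, f12, f13, f21, f22, f23, f31, f32, f33⟩ :=
    revolve_pds vr vz hvr hvz x y z ρ hρ hρpos
  have hu1 : (fun s : ℝ×ℝ => ((fun p : ℝ×ℝ => (ur p, uz p)) s).1) = ur := rfl
  have hu2 : (fun s : ℝ×ℝ => ((fun p : ℝ×ℝ => (ur p, uz p)) s).2) = uz := rfl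
  have hv1 : (fun s : ℝ×ℝ => ((fun p : ℝ×ℝ => (vr p, vz p)) s).1) = vr := rfl
  have hv2 : (fun s : ℝ×ℝ => ((fun p : ℝ×ℝ => (vr p, vz p)) s).2) = vz := rfl
  constructor
  · simp only [jdot3, jdot2, hu1, hu2, hv1, hv2,
      e11, e12, e13, e21, e22, e23, e31, e32, e33,
      f11, f12, f13, f21, f22, f23, f31, f32, f33]
    have := key_alg x y ρ (ur (ρ,z)) (pdr ur (ρ,z)) (pdz ur (ρ,z)) (pdr uz (ρ,z)) (pdz uz (ρ,z))
      (vr (ρ,z)) (pdr vr (ρ,z)) (pdz vr (ρ,z)) (pdr vz (ρ,z)) (pdz vz (ρ,z)) hρne hρ2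
    linarith [this]
  · simp only [jdot3, jdot2, hu1, hu2,
      e11, e12, e13, e21, e22, e23, e31, e32, e33]
    have := key_alg x y ρ (ur (ρ,z)) (pdr ur (ρ,z)) (pdz ur (ρ,z)) (pdr uz (ρ,z)) (pdz uz (ρ,z))
      (ur (ρ,z)) (pdr ur (ρ,z)) (pdz ur (ρ,z)) (pdr uz (ρ,z)) (pdz uz (ρ,z)) hρne hρ2
    have h2 : (ur (ρ,z) / ρ)^2 = ur (ρ,z) * ur (ρ,z) / ρ^2 := by ring
    linarith [this]
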